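/- Two binary (k,n) Parseval frames F and G are switching equivalent if and only if their Gram matrices are related by conjugation with a k×k permutation matrix: G_F = P G_G P*. -/

import Mathlib

open Matrix

section Aux

variable {k n : ℕ}

lemma permMatrix_orth (σ : Equiv.Perm (Fin k)) :
    σ.permMatrix (ZMod 2) * (σ.permMatrix (ZMod 2))ᵀ = 1 ∧
      (σ.permMatrix (ZMod 2))ᵀ * σ.permMatrix (ZMod 2) = 1 := by
  have h1 : (σ.permMatrix (ZMod 2))ᵀ = (σ⁻¹).permMatrix (ZMod 2) := by
    rw [Equiv.Perm.permMatrix, Equiv.Perm.permMatrix, ← PEquiv.toMatrix_symm,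
      ← Equiv.toPEquiv_symm]
    rfl
  constructor <;> rw [h1, Equiv.Perm.permMatrix, Equiv.Perm.permMatrix,
    ← PEquiv.toMatrix_trans, ← Equiv.toPEquiv_trans] <;>
    simp [Equiv.Perm.inv_def, Equiv.Perm.one_def, Equiv.toPEquiv_refl, PEquiv.toMatrix_refl]

lemma rows_eq_iff (F G : Fin k → Fin n → ZMod 2) (U : Matrix (Fin n) (Fin n) (ZMod 2))
    (π : Equiv.Perm (Fin k)) :
    (∀ j : Fin k, F j = U.mulVec (G (π j))) ↔
      Matrix.of F = π.permMatrix (ZMod 2) * Matrix.of G * Uᵀ := by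
  rw [Equiv.Perm.permMatrix, Matrix.mul_assoc, PEquiv.toMatrix_toPEquiv_mul]
  constructor
  · intro h
    ext j i
    simp only [of_apply, submatrix_apply, id_eq, mul_apply, transpose_apply]
    rw [h j]
    simp [mulVec, dotProduct, mul_comm]
  · intro h j
    funext i
    have := congrFun (congrFun h j) i
    simp only [of_apply, submatrix_apply, id_eq, mul_apply, transpose_apply] at this
    rw [this]
    simp [mulVec, dotProduct, mul_comm]

end Aux

/-- Two binary (k,n) Parseval frames (given as the rows of their analysis
matrices) are switching equivalent iff their Gram matrices are conjugate by a
permutation matrix. -/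
theorem switching_equiv_iff_gram_conjugate (k n : ℕ)
    (F G : Fin k → Fin n → ZMod 2)
    (hF : (Matrix.of F)ᵀ * Matrix.of F = 1)
    (hG : (Matrix.of G)ᵀ * Matrix.of G = 1) :
    (∃ (U : Matrix (Fin n) (Fin n) (ZMod 2)) (π : Equiv.Perm (Fin k)),
        U * Uᵀ = 1 ∧ Uᵀ * U = 1 ∧ ∀ j : Fin k, F j = U.mulVec (G (π j))) ↔
      (∃ σ : Equiv.Perm (Fin k),
        Matrix.of F * (Matrix.of F)ᵀ =
          σ.permMatrix (ZMod 2) * (Matrix.of G * (Matrix.of G)ᵀ) *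
            (σ.permMatrix (ZMod 2))ᵀ) := by
  set A := Matrix.of F with hA
  set B := Matrix.of G with hB
  constructor
  · rintro ⟨U, π, hUUt, hUtU, hrows⟩
    refine ⟨π, ?_⟩
    rw [rows_eq_iff] at hrows
    set P := π.permMatrix (ZMod 2)
    rw [← hA, ← hB] at hrows
    have hPt : Pᵀ = (π.permMatrix (ZMod 2))ᵀ := rfl
    calc A * Aᵀ = (P * B * Uᵀ) * (P * B * Uᵀ)ᵀ := by rw [hrows]
      _ = P * (B * (Uᵀ * (Uᵀ)ᵀ) * Bᵀ) * Pᵀ := by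
          simp only [Matrix.transpose_mul, Matrix.mul_assoc]
      _ = P * (B * Bᵀ) * Pᵀ := by
          rw [Matrix.transpose_transpose, hUtU, Matrix.mul_one]
  · rintro ⟨σ, hgram⟩
    set P := σ.permMatrix (ZMod 2) with hP
    have hPPt := (permMatrix_orth σ).1
    have hPtP := (permMatrix_orth σ).2
    rw [← hP] at hPPt hPtP
    refine ⟨Aᵀ * P * B, σ, ?_, ?_, ?_⟩
    · -- U Uᵀ = Aᵀ P B Bᵀ Pᵀ A = Aᵀ (P B Bᵀ Pᵀ) A = Aᵀ A Aᵀ A = 1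
      have : Aᵀ * P * B * (Aᵀ * P * B)ᵀ = Aᵀ * (P * (B * Bᵀ) * Pᵀ) * A := by
        simp only [Matrix.transpose_mul, Matrix.transpose_transpose, Matrix.mul_assoc]
      rw [this, ← hgram, ← Matrix.mul_assoc, hF, Matrix.one_mul, hF]
    · have : (Aᵀ * P * B)ᵀ * (Aᵀ * P * B) =
          Bᵀ * (Pᵀ * (A * Aᵀ) * P) * B := by
        simp only [Matrix.transpose_mul, Matrix.transpose_transpose, Matrix.mul_assoc]
      rw [this, hgram]
      have : Pᵀ * (P * (B * Bᵀ) * Pᵀ) * P = B * Bᵀ := by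
        calc Pᵀ * (P * (B * Bᵀ) * Pᵀ) * P
            = (Pᵀ * P) * (B * Bᵀ) * (Pᵀ * P) := by
              simp only [Matrix.mul_assoc]
          _ = B * Bᵀ := by rw [hPtP, Matrix.one_mul, Matrix.mul_one]
      rw [this, ← Matrix.mul_assoc, Matrix.mul_assoc Bᵀ B Bᵀ, ← Matrix.mul_assoc Bᵀ B,
        hG, Matrix.one_mul, hG]
    · rw [rows_eq_iff, ← hA, ← hB, ← hP]
      -- Goal: A = P * B * (Aᵀ * P * B)ᵀ
      have : P * B * (Aᵀ * P * B)ᵀ = (P * (B * Bᵀ) * Pᵀ) * A := by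
        simp only [Matrix.transpose_mul, Matrix.transpose_transpose, Matrix.mul_assoc]
      rw [this, ← hgram, Matrix.mul_assoc, hF, Matrix.mul_one]
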